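/- Let Q be a finite type and let H₄ be the complex vector space of functions (Q → ZMod 2)⁴ → ℂ. For all finsets α, β, γ ⊆ Q, the transversal CCCZ gate satisfies the operator identity CCCZ_Q ∘ X_α^{(1)} ∘ X_β^{(2)} ∘ X_γ^{(3)} = X_α^{(1)} ∘ X_β^{(2)} ∘ X_γ^{(3)} ∘ Z_{α∩β∩γ}^{(4)} ∘ CZ_{α∩β}^{(3,4)} ∘ CZ_{α∩γ}^{(2,4)} ∘ CZ_{β∩γ}^{(1,4)} ∘ CCZ_α^{(2,3,4)} ∘ CCZ_β^{(1,3,4)} ∘ CCZ_γ^{(1,2,4)} ∘ CCCZ_Q as linear maps on H₄: in particular a Z linking-charge string appears on register 4 supported on the triple intersection α∩β∩γ. -/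

import Mathlib

/-- Indicator bit string of a finset. -/
def chi {Q : Type*} [DecidableEq Q] (s : Finset Q) : Q → ZMod 2 :=
  fun q => if q ∈ s then 1 else 0

/-- The four-register state space: complex functions on (Q → ZMod 2)⁴. -/
abbrev H4 (Q : Type*) : Type _ :=
  ((Q → ZMod 2) × (Q → ZMod 2) × (Q → ZMod 2) × (Q → ZMod 2)) → ℂ

/-- Pauli X on register 1 at the positions in α. -/
def X1 {Q : Type*} [DecidableEq Q] (α : Finset Q) (f : H4 Q) : H4 Q :=
  fun v => f (v.1 + chi α, v.2.1, v.2.2.1, v.2.2.2)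

/-- Pauli X on register 2 at the positions in α. -/
def X2 {Q : Type*} [DecidableEq Q] (α : Finset Q) (f : H4 Q) : H4 Q :=
  fun v => f (v.1, v.2.1 + chi α, v.2.2.1, v.2.2.2)

/-- Pauli X on register 3 at the positions in α. -/
def X3 {Q : Type*} [DecidableEq Q] (α : Finset Q) (f : H4 Q) : H4 Q :=
  fun v => f (v.1, v.2.1, v.2.2.1 + chi α, v.2.2.2)

/-- Pauli Z on register 4 at the positions in α. -/
def Z4 {Q : Type*} (α : Finset Q) (f : H4 Q) : H4 Q :=
  fun v => (-1 : ℂ) ^ ((α.filter (fun q => v.2.2.2 q = 1)).card) * f v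

/-- Controlled-Z between registers 3 and 4 on the positions in α. -/
def CZ34 {Q : Type*} (α : Finset Q) (f : H4 Q) : H4 Q :=
  fun v => (-1 : ℂ) ^ ((α.filter (fun q => v.2.2.1 q = 1 ∧ v.2.2.2 q = 1)).card) * f v

/-- Controlled-Z between registers 2 and 4 on the positions in α. -/
def CZ24 {Q : Type*} (α : Finset Q) (f : H4 Q) : H4 Q :=
  fun v => (-1 : ℂ) ^ ((α.filter (fun q => v.2.1 q = 1 ∧ v.2.2.2 q = 1)).card) * f v

/-- Controlled-Z between registers 1 and 4 on the positions in α. -/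
def CZ14 {Q : Type*} (α : Finset Q) (f : H4 Q) : H4 Q :=
  fun v => (-1 : ℂ) ^ ((α.filter (fun q => v.1 q = 1 ∧ v.2.2.2 q = 1)).card) * f v

/-- Doubly-controlled-Z between registers 2, 3 and 4 on the positions in α. -/
def CCZ234 {Q : Type*} (α : Finset Q) (f : H4 Q) : H4 Q :=
  fun v => (-1 : ℂ) ^
    ((α.filter (fun q => v.2.1 q = 1 ∧ v.2.2.1 q = 1 ∧ v.2.2.2 q = 1)).card) * f v

/-- Doubly-controlled-Z between registers 1, 3 and 4 on the positions in α. -/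
def CCZ134 {Q : Type*} (α : Finset Q) (f : H4 Q) : H4 Q :=
  fun v => (-1 : ℂ) ^
    ((α.filter (fun q => v.1 q = 1 ∧ v.2.2.1 q = 1 ∧ v.2.2.2 q = 1)).card) * f v

/-- Doubly-controlled-Z between registers 1, 2 and 4 on the positions in α. -/
def CCZ124 {Q : Type*} (α : Finset Q) (f : H4 Q) : H4 Q :=
  fun v => (-1 : ℂ) ^
    ((α.filter (fun q => v.1 q = 1 ∧ v.2.1 q = 1 ∧ v.2.2.2 q = 1)).card) * f v

/-- Triply-controlled-Z on the positions in α. -/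
def CCCZ {Q : Type*} (α : Finset Q) (f : H4 Q) : H4 Q :=
  fun v => (-1 : ℂ) ^
    ((α.filter (fun q =>
      v.1 q = 1 ∧ v.2.1 q = 1 ∧ v.2.2.1 q = 1 ∧ v.2.2.2 q = 1)).card) * f v

lemma filter_to_univ {Q : Type*} [Fintype Q] [DecidableEq Q] (s : Finset Q) (p : Q → Prop)
    [DecidablePred p] : s.filter p = Finset.univ.filter (fun q => q ∈ s ∧ p q) := by
  ext q; simp

lemma card_cast_sum {Q : Type*} [Fintype Q] (p : Q → Prop) [DecidablePred p] :
    (((Finset.univ : Finset Q).filter p).card : ZMod 2)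
      = ∑ q, (if p q then (1 : ZMod 2) else 0) := by
  rw [Finset.card_filter]
  push_cast
  rfl

lemma neg_one_pow_congr' (m n : ℕ) (h : (m : ZMod 2) = (n : ZMod 2)) :
    ((-1 : ℂ)) ^ m = (-1) ^ n := by
  have h2 : m % 2 = n % 2 := by
    have := (ZMod.natCast_eq_natCast_iff' m n 2).mp h
    simpa using this
  rw [neg_one_pow_eq_pow_mod_two, h2, ← neg_one_pow_eq_pow_mod_two]

theorem stmt_13 {Q : Type*} [DecidableEq Q] [Fintype Q] (α β γ : Finset Q) :
    CCCZ (Finset.univ : Finset Q) ∘ X1 α ∘ X2 β ∘ X3 γ =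
      X1 α ∘ X2 β ∘ X3 γ ∘ Z4 (α ∩ β ∩ γ) ∘
        CZ34 (α ∩ β) ∘ CZ24 (α ∩ γ) ∘ CZ14 (β ∩ γ) ∘
        CCZ234 α ∘ CCZ134 β ∘ CCZ124 γ ∘
        CCCZ (Finset.univ : Finset Q) := by
  funext f v
  simp only [Function.comp, X1, X2, X3, Z4, CZ34, CZ24, CZ14, CCZ234, CCZ134, CCZ124, CCCZ]
  rw [← mul_assoc, ← mul_assoc, ← mul_assoc, ← mul_assoc, ← mul_assoc, ← mul_assoc, ← mul_assoc,
    ← pow_add, ← pow_add, ← pow_add, ← pow_add, ← pow_add, ← pow_add, ← pow_add]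
  congr 1
  apply neg_one_pow_congr'
  push_cast
  rw [filter_to_univ (α ∩ β ∩ γ), filter_to_univ (α ∩ β), filter_to_univ (α ∩ γ),
    filter_to_univ (β ∩ γ), filter_to_univ α, filter_to_univ β, filter_to_univ γ]
  simp only [card_cast_sum, ← Finset.sum_add_distrib]
  apply Finset.sum_congr rfl
  intro q _
  simp only [Finset.mem_inter, Finset.mem_univ, true_and, Pi.add_apply, chi]
  by_cases hα : q ∈ α <;> by_cases hβ : q ∈ β <;> by_cases hγ : q ∈ γ <;>
    simp only [hα, hβ, hγ, if_true, if_false, true_and, false_and, and_true, and_false,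
      if_neg, not_false_iff] <;>
  · generalize v.1 q = a
    generalize v.2.1 q = b
    generalize v.2.2.1 q = c
    generalize v.2.2.2 q = d
    revert a b c d
    decide
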